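/- (Same signature lemma) Let f^[α], g^[β] ∈ I^[Σ] with st(α) = st(β) (equal signature terms), and assume every u^[μ] ∈ I^[Σ] with s(μ) ≺ s(α) s-reduces to zero by G^[Σ]. If both f^[α] and g^[β] are regular s-reduced (admit no regular s-reduction by G^[Σ]), then f = g. If both are only regular top s-reduced, then lt(f) = lt(g). -/

import Mathlib

open Finsupp

/-- The free algebra `K⟨X⟩`, realized as the monoid algebra of the free monoid. -/
abbrev FreeAlg (K X : Type*) [Field K] := MonoidAlgebra K (FreeMonoid X)

/-- Module monomials `a εᵢ b` of the free bimodule of rank `r`. -/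
structure MonMod (X : Type*) (r : ℕ) where
  left : FreeMonoid X
  idx : Fin r
  right : FreeMonoid X

/-- The free bimodule `Σ = (K⟨X⟩ ⊗ K⟨X⟩)^r`, realized as the span of module monomials. -/
abbrev FreeBimod (K X : Type*) [Field K] (r : ℕ) := MonMod X r →₀ K

/-- Two-sided action of a pair of words on a module monomial: `a·(c εᵢ d)·b = (ac) εᵢ (db)`. -/
def act {X : Type*} {r : ℕ} (a b : FreeMonoid X) (μ : MonMod X r) : MonMod X r :=
  ⟨a * μ.left, μ.idx, μ.right * b⟩

/-- The monomial `w` as an element of the free algebra. -/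
noncomputable def mon (K : Type*) [Field K] {X : Type*} (w : FreeMonoid X) : FreeAlg K X :=
  MonoidAlgebra.of K (FreeMonoid X) w

/-- The evaluation homomorphism `Σ → K⟨X⟩`, `εᵢ ↦ fᵢ`. -/
noncomputable def evalS {K X : Type*} [Field K] {r : ℕ} (F : Fin r → FreeAlg K X)
    (α : FreeBimod K X r) : FreeAlg K X :=
  α.sum fun μ c => c • (mon K μ.left * F μ.idx * mon K μ.right)

section Orders

variable {K X : Type*} [Field K] [LinearOrder (FreeMonoid X)] {r : ℕ}
  [LinearOrder (MonMod X r)]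

/-- The signature of a module element: the largest module monomial of its support
(`⊥` for the zero element). -/
noncomputable def sigW (α : FreeBimod K X r) : WithBot (MonMod X r) := α.support.max

/-- The leading monomial of a nonzero polynomial (junk value `1` for `0`). -/
noncomputable def lmon (p : FreeAlg K X) : FreeMonoid X :=
  if h : p.coeff.support.Nonempty then p.coeff.support.max' h else 1

/-- The leading coefficient. -/
noncomputable def lcoeff (p : FreeAlg K X) : K := p.coeff (lmon p)

/-- The leading term. -/
noncomputable def lterm (p : FreeAlg K X) : FreeAlg K X :=
  MonoidAlgebra.single (lmon p) (lcoeff p)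

/-- `f^[α]` is top s-reducible by the set `G^[Σ]`. -/
def TopSRed (G : Set (FreeAlg K X × FreeBimod K X r)) (f : FreeAlg K X)
    (α : FreeBimod K X r) : Prop :=
  ∃ g γ, (g, γ) ∈ G ∧ g ≠ 0 ∧ ∃ a b : FreeMonoid X,
    a * lmon g * b = lmon f ∧ WithBot.map (act a b) (sigW γ) ≤ sigW α

/-- `f^[α]` is singular top s-reducible by `G^[Σ]`. -/
def SingTopSRed (G : Set (FreeAlg K X × FreeBimod K X r)) (f : FreeAlg K X)
    (α : FreeBimod K X r) : Prop :=
  f ≠ 0 ∧ ∃ g γ, (g, γ) ∈ G ∧ g ≠ 0 ∧ ∃ a b : FreeMonoid X,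
    a * lmon g * b = lmon f ∧ WithBot.map (act a b) (sigW γ) = sigW α

/-- `f^[α]` admits a regular s-reduction by `G^[Σ]`. -/
def RegSRedible (G : Set (FreeAlg K X × FreeBimod K X r)) (f : FreeAlg K X)
    (α : FreeBimod K X r) : Prop :=
  ∃ g γ, (g, γ) ∈ G ∧ g ≠ 0 ∧ ∃ a b : FreeMonoid X,
    a * lmon g * b ∈ f.coeff.support ∧ WithBot.map (act a b) (sigW γ) < sigW α

/-- `f^[α]` admits a regular *top* s-reduction by `G^[Σ]`. -/
def RegTopSRedible (G : Set (FreeAlg K X × FreeBimod K X r)) (f : FreeAlg K X)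
    (α : FreeBimod K X r) : Prop :=
  f ≠ 0 ∧ ∃ g γ, (g, γ) ∈ G ∧ g ≠ 0 ∧ ∃ a b : FreeMonoid X,
    a * lmon g * b = lmon f ∧ WithBot.map (act a b) (sigW γ) < sigW α

/-- Result of one s-reduction step of `f^[α]` by `a g^[γ] b`. -/
noncomputable def sredResult (f : FreeAlg K X) (α : FreeBimod K X r)
    (g : FreeAlg K X) (γ : FreeBimod K X r) (a b : FreeMonoid X) :
    FreeAlg K X × FreeBimod K X r :=
  (f - (f.coeff (a * lmon g * b) * (lcoeff g)⁻¹) • (mon K a * g * mon K b),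
   α - (f.coeff (a * lmon g * b) * (lcoeff g)⁻¹) • Finsupp.mapDomain (act a b) γ)

/-- One s-reduction step by `G^[Σ]`. -/
def SRedStep (G : Set (FreeAlg K X × FreeBimod K X r))
    (p q : FreeAlg K X × FreeBimod K X r) : Prop :=
  ∃ g γ, (g, γ) ∈ G ∧ g ≠ 0 ∧ ∃ a b : FreeMonoid X,
    a * lmon g * b ∈ p.1.coeff.support ∧ WithBot.map (act a b) (sigW γ) ≤ sigW p.2 ∧
    q = sredResult p.1 p.2 g γ a b

/-- One *regular* s-reduction step by `G^[Σ]`. -/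
def RegSRedStep (G : Set (FreeAlg K X × FreeBimod K X r))
    (p q : FreeAlg K X × FreeBimod K X r) : Prop :=
  ∃ g γ, (g, γ) ∈ G ∧ g ≠ 0 ∧ ∃ a b : FreeMonoid X,
    a * lmon g * b ∈ p.1.coeff.support ∧ WithBot.map (act a b) (sigW γ) < sigW p.2 ∧
    q = sredResult p.1 p.2 g γ a b

/-- `p` s-reduces to zero by `G^[Σ]`. -/
def SRedToZero (G : Set (FreeAlg K X × FreeBimod K X r))
    (p : FreeAlg K X × FreeBimod K X r) : Prop :=
  ∃ σ : FreeBimod K X r, Relation.ReflTransGen (SRedStep G) p (0, σ)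

/-- `p` regular s-reduces to zero by `G^[Σ]`. -/
def RegSRedToZero (G : Set (FreeAlg K X × FreeBimod K X r))
    (p : FreeAlg K X × FreeBimod K X r) : Prop :=
  ∃ σ : FreeBimod K X r, Relation.ReflTransGen (RegSRedStep G) p (0, σ)

/-- `G^[Σ] ⊆ I^[Σ]`: labelled polynomials with nonzero polynomial part. -/
def InLab (F : Fin r → FreeAlg K X) (G : Set (FreeAlg K X × FreeBimod K X r)) : Prop :=
  ∀ p ∈ G, p.1 = evalS F p.2 ∧ p.1 ≠ 0

/-- `G^[Σ]` is a labelled Gröbner basis of `I^[Σ]`. -/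
def LabGB (F : Fin r → FreeAlg K X) (G : Set (FreeAlg K X × FreeBimod K X r)) : Prop :=
  InLab F G ∧ ∀ (f : FreeAlg K X) (α : FreeBimod K X r), f = evalS F α → SRedToZero G (f, α)

/-- `G^[Σ]` is a labelled Gröbner basis of `I^[Σ]` up to signature `σ`. -/
def LabGBUpTo (F : Fin r → FreeAlg K X) (G : Set (FreeAlg K X × FreeBimod K X r))
    (σ : MonMod X r) : Prop :=
  InLab F G ∧ ∀ (f : FreeAlg K X) (α : FreeBimod K X r), f = evalS F α →
    sigW α < (σ : WithBot (MonMod X r)) → SRedToZero G (f, α)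

/-- `G^[Σ]` is a *minimal* labelled Gröbner basis of `I^[Σ]`. -/
def MinLabGB (F : Fin r → FreeAlg K X) (G : Set (FreeAlg K X × FreeBimod K X r)) : Prop :=
  LabGB F G ∧ ∀ p ∈ G, ¬ TopSRed (G \ {p}) p.1 p.2

end Orders


section AuxLemmas

variable {K X : Type*} [Field K] {r : ℕ}

lemma support_sub' {ι M : Type*} [DecidableEq ι] [AddGroup M] (x y : ι →₀ M) :
    (x - y).support ⊆ x.support ∪ y.support := by
  intro t ht
  by_contra hc
  simp only [Finset.mem_union, Finsupp.mem_support_iff, not_or, not_not] at hc ht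
  exact ht (by rw [Finsupp.sub_apply, hc.1, hc.2, sub_zero])

lemma evalS_sub (F : Fin r → FreeAlg K X) (α β : FreeBimod K X r) :
    evalS F (α - β) = evalS F α - evalS F β := by
  unfold evalS
  exact Finsupp.sum_sub_index (fun μ c d => sub_smul c d _)

lemma evalS_zero (F : Fin r → FreeAlg K X) : evalS F (0 : FreeBimod K X r) = 0 :=
  Finsupp.sum_zero_index

lemma mon_mul_mul_mon (a b : FreeMonoid X) (g : FreeAlg K X) :
    (mon K a * g * mon K b).coeff = Finsupp.mapDomain (fun u => a * u * b) g.coeff := by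
  induction g using MonoidAlgebra.induction_linear with
  | zero => simp
  | add p q hp hq => rw [mul_add, add_mul, MonoidAlgebra.coeff_add, hp, hq, MonoidAlgebra.coeff_add, Finsupp.mapDomain_add]
  | single u c =>
      rw [MonoidAlgebra.coeff_single, Finsupp.mapDomain_single]
      show (mon K a * MonoidAlgebra.single u c * mon K b).coeff = (MonoidAlgebra.single (a * u * b) c).coeff
      unfold mon
      simp only [MonoidAlgebra.of_apply]
      rw [MonoidAlgebra.single_mul_single, MonoidAlgebra.single_mul_single, one_mul, mul_one]

variable [LinearOrder (FreeMonoid X)] [LinearOrder (MonMod X r)]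

lemma lmon_mem {p : FreeAlg K X} (hp : p ≠ 0) : lmon p ∈ p.coeff.support := by
  have h : p.coeff.support.Nonempty := Finsupp.support_nonempty_iff.mpr (mt MonoidAlgebra.coeff_eq_zero.mp hp)
  rw [lmon, dif_pos h]; exact Finset.max'_mem _ _

lemma le_lmon {p : FreeAlg K X} {w : FreeMonoid X} (hw : w ∈ p.coeff.support) : w ≤ lmon p := by
  have h : p.coeff.support.Nonempty := ⟨w, hw⟩
  rw [lmon, dif_pos h]; exact Finset.le_max' _ _ hw

lemma lmon_eq_of {p : FreeAlg K X} {m : FreeMonoid X} (hm : m ∈ p.coeff.support)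
    (hub : ∀ w ∈ p.coeff.support, w ≤ m) : lmon p = m := by
  have h : p.coeff.support.Nonempty := ⟨m, hm⟩
  rw [lmon, dif_pos h]
  exact le_antisymm (Finset.max'_le _ _ _ hub) (Finset.le_max' _ _ hm)

lemma max_lt_of_forall {τ : Type*} [LinearOrder τ] {s : Finset τ} {b : τ}
    (h : ∀ a ∈ s, a < b) : s.max < (b : WithBot τ) := by
  rcases s.eq_empty_or_nonempty with rfl | hs
  · simpa using WithBot.bot_lt_coe b
  · rw [← Finset.coe_max' hs]
    exact_mod_cast h _ (Finset.max'_mem _ hs)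

lemma max_le_of_forall' {τ : Type*} [LinearOrder τ] {s : Finset τ} {M : WithBot τ}
    (h : ∀ a ∈ s, (a : WithBot τ) ≤ M) : s.max ≤ M := by
  rcases s.eq_empty_or_nonempty with rfl | hs
  · simp
  · rw [← Finset.coe_max' hs]
    exact h _ (Finset.max'_mem _ hs)

lemma sigW_eq_bot {α : FreeBimod K X r} (h : sigW α = ⊥) : α = 0 := by
  rw [sigW, Finset.max_eq_bot, Finsupp.support_eq_empty] at h; exact h

lemma le_sigW {α : FreeBimod K X r} {t : MonMod X r} (ht : t ∈ α.support) :
    (t : WithBot (MonMod X r)) ≤ sigW α := Finset.le_max ht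

lemma sigW_sub_lt {α β : FreeBimod K X r} {s : MonMod X r}
    (hα : sigW α = (s : WithBot (MonMod X r))) (hβ : sigW β = (s : WithBot (MonMod X r)))
    (hc : α s = β s) : sigW (α - β) < (s : WithBot (MonMod X r)) := by
  classical
  apply max_lt_of_forall
  intro t ht
  have hts : t ≠ s := by
    intro h; subst h
    rw [Finsupp.mem_support_iff, Finsupp.sub_apply, hc, sub_self] at ht
    exact ht rfl
  rcases Finset.mem_union.mp (support_sub' α β ht) with h | h
  · have : (t : WithBot (MonMod X r)) ≤ (s : WithBot (MonMod X r)) := hα ▸ le_sigW h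
    exact lt_of_le_of_ne (WithBot.coe_le_coe.mp this) hts
  · have : (t : WithBot (MonMod X r)) ≤ (s : WithBot (MonMod X r)) := hβ ▸ le_sigW h
    exact lt_of_le_of_ne (WithBot.coe_le_coe.mp this) hts

lemma sigW_sub_le (x y : FreeBimod K X r) : sigW (x - y) ≤ sigW x ⊔ sigW y := by
  classical
  apply max_le_of_forall'
  intro t ht
  rcases Finset.mem_union.mp (support_sub' x y ht) with h | h
  · exact le_sup_of_le_left (le_sigW h)
  · exact le_sup_of_le_right (le_sigW h)

lemma sigW_smul_le (c : K) (x : FreeBimod K X r) : sigW (c • x) ≤ sigW x :=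
  Finset.max_mono Finsupp.support_smul

lemma sigW_mapDomain_le (a b : FreeMonoid X)
    (hmod : ∀ (a b : FreeMonoid X) (μ ν : MonMod X r), μ ≤ ν → act a b μ ≤ act a b ν)
    (γ : FreeBimod K X r) :
    sigW (Finsupp.mapDomain (act a b) γ) ≤ WithBot.map (act a b) (sigW γ) := by
  classical
  rcases γ.support.eq_empty_or_nonempty with he | hs
  · have : γ = 0 := Finsupp.support_eq_empty.mp he
    subst this
    simp [sigW, Finsupp.mapDomain_zero]
  · apply max_le_of_forall'
    intro t ht
    rcases Finset.mem_image.mp (Finsupp.mapDomain_support ht) with ⟨u, hu, rfl⟩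
    have h2 : act a b u ≤ act a b (γ.support.max' hs) :=
      hmod a b _ _ (Finset.le_max' _ _ hu)
    have hγ : sigW γ = ((γ.support.max' hs : MonMod X r) : WithBot (MonMod X r)) :=
      (Finset.coe_max' hs).symm
    rw [hγ, WithBot.map_coe]
    exact_mod_cast h2

/-- Along a chain of s-reductions ending at zero, the leading monomial of the
starting polynomial is eventually top-reduced, at signature below `A`. -/
lemma chain_top
    (hmon : ∀ a b u v : FreeMonoid X, u ≤ v → a * u * b ≤ a * v * b)
    (hmod : ∀ (a b : FreeMonoid X) (μ ν : MonMod X r), μ ≤ ν → act a b μ ≤ act a b ν)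
    (G : Set (FreeAlg K X × FreeBimod K X r)) (σ : FreeBimod K X r)
    (A : WithBot (MonMod X r)) (m : FreeMonoid X) :
    ∀ p : FreeAlg K X × FreeBimod K X r, Relation.ReflTransGen (SRedStep G) p (0, σ) →
      p.1 ≠ 0 → lmon p.1 = m → sigW p.2 < A →
      ∃ g' γ', (g', γ') ∈ G ∧ g' ≠ 0 ∧ ∃ a b : FreeMonoid X,
        a * lmon g' * b = m ∧ WithBot.map (act a b) (sigW γ') < A := by
  classical
  intro p hchain
  induction hchain using Relation.ReflTransGen.head_induction_on with
  | refl => intro h _ _; exact absurd rfl h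
  | head hstep _ ih =>
    rename_i p' q' _
    intro hp1 hlm hsigA
    obtain ⟨g', γ', hGm, hg0, a, b, hmem, hle, hq⟩ := hstep
    by_cases heq : a * lmon g' * b = m
    · exact ⟨g', γ', hGm, hg0, a, b, heq, lt_of_le_of_lt hle hsigA⟩
    · have hlt : a * lmon g' * b < m := lt_of_le_of_ne (hlm ▸ le_lmon hmem) heq
      set c : K := p'.1.coeff (a * lmon g' * b) * (lcoeff g')⁻¹ with hc
      set E : FreeAlg K X := mon K a * g' * mon K b with hE
      have hq1 : q'.1 = p'.1 - c • E := by rw [hq]; rfl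
      have hq2 : q'.2 = p'.2 - c • Finsupp.mapDomain (act a b) γ' := by rw [hq]; rfl
      -- support of the subtracted polynomial is below a * lmon g' * b
      have hsub_le : ∀ w ∈ (c • E).coeff.support, w ≤ a * lmon g' * b := by
        intro w hw
        have hw2 : w ∈ E.coeff.support := Finsupp.support_smul hw
        rw [hE, mon_mul_mul_mon] at hw2
        rcases Finset.mem_image.mp (Finsupp.mapDomain_support hw2) with ⟨u, hu, rfl⟩
        exact hmon a b _ _ (le_lmon hu)
      have hmnot : m ∉ (c • E).coeff.support := by
        intro hmem'
        exact absurd (hsub_le m hmem') (not_le.mpr hlt)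
      have hq1m : q'.1.coeff m = p'.1.coeff m := by
        rw [hq1, MonoidAlgebra.coeff_sub, Finsupp.sub_apply, Finsupp.notMem_support_iff.mp hmnot, sub_zero]
      have hp1m : p'.1.coeff m ≠ 0 := by
        have := lmon_mem hp1
        rw [hlm] at this
        exact Finsupp.mem_support_iff.mp this
      have hq1m' : q'.1.coeff m ≠ 0 := by rw [hq1m]; exact hp1m
      have hq1ne : q'.1 ≠ 0 := fun h => hq1m' (by rw [h]; rfl)
      have hmmem : m ∈ q'.1.coeff.support := Finsupp.mem_support_iff.mpr hq1m'
      have hlmq : lmon q'.1 = m := by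
        apply lmon_eq_of hmmem
        intro w hw
        rw [hq1] at hw
        rcases Finset.mem_union.mp (support_sub' p'.1.coeff (c • E).coeff hw) with h | h
        · exact hlm ▸ le_lmon h
        · exact le_of_lt (lt_of_le_of_lt (hsub_le w h) hlt)
      have hsigq : sigW q'.2 < A := by
        refine lt_of_le_of_lt ?_ hsigA
        rw [hq2]
        refine le_trans (sigW_sub_le _ _) (sup_le le_rfl ?_)
        exact le_trans (sigW_smul_le c _) (le_trans (sigW_mapDomain_le a b hmod γ') hle)
      exact ih hq1ne hlmq hsigq

lemma lmon_neg (p : FreeAlg K X) : lmon (-p) = lmon p := by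
  have h : (-p).coeff.support = p.coeff.support := Finsupp.support_neg p.coeff
  simp only [lmon, h]

lemma lcoeff_ne_zero {p : FreeAlg K X} (hp : p ≠ 0) : lcoeff p ≠ 0 :=
  Finsupp.mem_support_iff.mp (lmon_mem hp)

lemma sub_lead {f g : FreeAlg K X} (h : f.coeff (lmon g) ≠ g.coeff (lmon g)) (hub : lmon f ≤ lmon g) :
    f - g ≠ 0 ∧ lmon (f - g) = lmon g := by
  classical
  have hval : (f - g).coeff (lmon g) ≠ 0 := by
    rw [MonoidAlgebra.coeff_sub, Finsupp.sub_apply]; exact sub_ne_zero.mpr h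
  have hmem : lmon g ∈ (f - g).coeff.support := Finsupp.mem_support_iff.mpr hval
  have hne : f - g ≠ 0 := fun hz => hval (by rw [hz]; rfl)
  refine ⟨hne, lmon_eq_of hmem ?_⟩
  intro w hw
  rcases Finset.mem_union.mp (support_sub' f.coeff g.coeff hw) with h1 | h1
  · exact le_trans (le_lmon h1) hub
  · exact le_lmon h1

lemma not_mem_apply_eq_zero {f : FreeAlg K X} {w : FreeMonoid X} (h : lmon f < w) :
    f.coeff w = 0 := by
  by_contra hc
  exact absurd (le_lmon (Finsupp.mem_support_iff.mpr hc)) (not_le.mpr h)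

end AuxLemmas

/-- **Same signature lemma.** Let `f^[α], g^[β] ∈ I^[Σ]` have equal signature terms,
and assume every `u^[μ] ∈ I^[Σ]` with `s(μ) ≺ s(α)` s-reduces to zero by `G^[Σ]`.
If both are regular s-reduced, then `f = g`; if both are regular top s-reduced,
then `lt(f) = lt(g)`. -/
theorem same_signature_lemma {K X : Type*} [Field K] {r : ℕ}
    [LinearOrder (FreeMonoid X)] [WellFoundedLT (FreeMonoid X)]
    [LinearOrder (MonMod X r)] [WellFoundedLT (MonMod X r)]
    (hmon : ∀ a b u v : FreeMonoid X, u ≤ v → a * u * b ≤ a * v * b)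
    (hmod : ∀ (a b : FreeMonoid X) (μ ν : MonMod X r), μ ≤ ν → act a b μ ≤ act a b ν)
    (hcomp : ∀ (u v : FreeMonoid X) (i : Fin r),
      (u ≤ v ↔ (⟨u, i, 1⟩ : MonMod X r) ≤ ⟨v, i, 1⟩) ∧
      (u ≤ v ↔ (⟨1, i, u⟩ : MonMod X r) ≤ ⟨1, i, v⟩))
    (F : Fin r → FreeAlg K X) (G : Set (FreeAlg K X × FreeBimod K X r))
    (hG : InLab F G)
    (f g : FreeAlg K X) (α β : FreeBimod K X r)
    (hf : f = evalS F α) (hg : g = evalS F β)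
    (hsig : sigW α = sigW β)
    (hsc : ∀ s : MonMod X r, sigW α = (s : WithBot (MonMod X r)) → α s = β s)
    (hall : ∀ (u : FreeAlg K X) (μ : FreeBimod K X r),
      u = evalS F μ → sigW μ < sigW α → SRedToZero G (u, μ)) :
    ((¬ RegSRedible G f α) → (¬ RegSRedible G g β) → f = g) ∧
    ((¬ RegTopSRedible G f α) → (¬ RegTopSRedible G g β) → lterm f = lterm g) := by
  classical
  have hfg : f - g = evalS F (α - β) := by rw [evalS_sub, hf, hg]
  constructor
  · intro hnf hng
    by_contra hne
    have hh : f - g ≠ 0 := sub_ne_zero.mpr hne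
    rcases eq_or_ne (sigW α) ⊥ with hbot | hnbot
    · have hα0 : α = 0 := sigW_eq_bot hbot
      have hβ0 : β = 0 := sigW_eq_bot (hsig ▸ hbot)
      exact hne (by rw [hf, hg, hα0, hβ0])
    · obtain ⟨s, hs⟩ := WithBot.ne_bot_iff_exists.mp hnbot
      have hsd : sigW (α - β) < sigW α := by
        rw [← hs]
        exact sigW_sub_lt hs.symm (hsig ▸ hs.symm) (hsc s hs.symm)
      obtain ⟨σ, hchain⟩ := hall (f - g) (α - β) hfg hsd
      rcases Relation.ReflTransGen.cases_head hchain with heq | ⟨q, hstep, _⟩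
      · exact hh (congrArg Prod.fst heq)
      · obtain ⟨g', γ', hGm, hg0, a, b, hmem, hle, _⟩ := hstep
        have hltα : WithBot.map (act a b) (sigW γ') < sigW α := lt_of_le_of_lt hle hsd
        rcases Finset.mem_union.mp (support_sub' f.coeff g.coeff hmem) with h | h
        · exact hnf ⟨g', γ', hGm, hg0, a, b, h, hltα⟩
        · exact hng ⟨g', γ', hGm, hg0, a, b, h, hsig ▸ hltα⟩
  · intro hnf hng
    by_contra hne
    rcases eq_or_ne (sigW α) ⊥ with hbot | hnbot
    · have hα0 : α = 0 := sigW_eq_bot hbot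
      have hβ0 : β = 0 := sigW_eq_bot (hsig ▸ hbot)
      have hf0 : f = 0 := by rw [hf, hα0, evalS_zero]
      have hg0 : g = 0 := by rw [hg, hβ0, evalS_zero]
      exact hne (by rw [hf0, hg0])
    · obtain ⟨s, hs⟩ := WithBot.ne_bot_iff_exists.mp hnbot
      have hsd : sigW (α - β) < sigW α := by
        rw [← hs]
        exact sigW_sub_lt hs.symm (hsig ▸ hs.symm) (hsc s hs.symm)
      have key : ∀ m : FreeMonoid X, f - g ≠ 0 → lmon (f - g) = m →
          ∃ g' γ', (g', γ') ∈ G ∧ g' ≠ 0 ∧ ∃ a b : FreeMonoid X,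
            a * lmon g' * b = m ∧ WithBot.map (act a b) (sigW γ') < sigW α := by
        intro m hh hlm
        obtain ⟨σ, hchain⟩ := hall (f - g) (α - β) hfg hsd
        exact chain_top hmon hmod G σ (sigW α) m (f - g, α - β) hchain hh hlm hsd
      have main : (f - g ≠ 0) ∧
          ((f ≠ 0 ∧ lmon (f - g) = lmon f) ∨ (g ≠ 0 ∧ lmon (f - g) = lmon g)) := by
        rcases eq_or_ne f 0 with hf0 | hf0
        · rcases eq_or_ne g 0 with hg0 | hg0
          · exact absurd (by rw [hf0, hg0]) hne
          · refine ⟨?_, Or.inr ⟨hg0, ?_⟩⟩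
            · rw [hf0, zero_sub]; exact neg_ne_zero.mpr hg0
            · rw [hf0, zero_sub, lmon_neg]
        · rcases eq_or_ne g 0 with hg0 | hg0
          · refine ⟨?_, Or.inl ⟨hf0, ?_⟩⟩
            · rw [hg0, sub_zero]; exact hf0
            · rw [hg0, sub_zero]
          · rcases lt_trichotomy (lmon f) (lmon g) with hlt | heq | hlt
            · have hv : f.coeff (lmon g) ≠ g.coeff (lmon g) := by
                rw [not_mem_apply_eq_zero hlt]
                exact fun hz => lcoeff_ne_zero hg0 hz.symm
              exact ⟨(sub_lead hv hlt.le).1, Or.inr ⟨hg0, (sub_lead hv hlt.le).2⟩⟩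
            · have hcc : lcoeff f ≠ lcoeff g := by
                intro hc
                exact hne (by rw [lterm, lterm, heq, hc])
              have hv : f.coeff (lmon g) ≠ g.coeff (lmon g) := by
                unfold lcoeff at hcc
                rw [heq] at hcc
                exact hcc
              refine ⟨(sub_lead hv heq.le).1, Or.inl ⟨hf0, ?_⟩⟩
              rw [(sub_lead hv heq.le).2, heq]
            · have hv : g.coeff (lmon f) ≠ f.coeff (lmon f) := by
                rw [not_mem_apply_eq_zero hlt]
                exact fun hz => lcoeff_ne_zero hf0 hz.symm
              have h2 := sub_lead hv hlt.le
              have hne2 : f - g ≠ 0 := by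
                rw [neg_sub g f |>.symm]
                exact neg_ne_zero.mpr h2.1
              refine ⟨hne2, Or.inl ⟨hf0, ?_⟩⟩
              rw [neg_sub g f |>.symm, lmon_neg, h2.2]
      obtain ⟨hh, hcase⟩ := main
      rcases hcase with ⟨hf0, hlmf⟩ | ⟨hg0, hlmg⟩
      · obtain ⟨g', γ', hGm, hg0', a, b, habm, hlt⟩ := key (lmon f) hh hlmf
        exact hnf ⟨hf0, g', γ', hGm, hg0', a, b, habm, hlt⟩
      · obtain ⟨g', γ', hGm, hg0', a, b, habm, hlt⟩ := key (lmon g) hh hlmg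
        exact hng ⟨hg0, g', γ', hGm, hg0', a, b, habm, hsig ▸ hlt⟩
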